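/- Every finite simple graph G on n vertices can be embedded in R^{n−1} as a two-distance set: there exist b > 1 and an injective map f: V(G) → R^{n−1} with dist(f(u),f(v)) = 1 for edges uv and dist(f(u),f(v)) = b for non-edges uv (u ≠ v). -/

import Mathlib

open Polynomial Matrix

noncomputable section

/-- The Borsuk number of a bounded set `S`: the least `k` such that `S` can be covered
by `k` subsets each of diameter strictly smaller than the diameter of `S`. -/
def borsukNumber {d : ℕ} (S : Set (EuclideanSpace ℝ (Fin d))) : ℕ :=
  sInf {k | ∃ c : Fin k → Set (EuclideanSpace ℝ (Fin d)),
    (∀ i, c i ⊆ S ∧ Metric.diam (c i) < Metric.diam S) ∧ S ⊆ ⋃ i, c i}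

/-- The clique covering number `θ(G)`: the least number of cliques covering all vertices. -/
def cliqueCoverNumber {V : Type*} (G : SimpleGraph V) : ℕ :=
  sInf {k | ∃ c : Fin k → Set V, (∀ i, G.IsClique (c i)) ∧ (⋃ i, c i) = Set.univ}

/-- The bordered matrix `A_G(t)`: first row and column `(0,1,…,1)`, zero diagonal,
entry `1` at edges of `G` and `t` at non-edges. The `none` index is the border. -/
def graphMat {n : ℕ} (G : SimpleGraph (Fin n)) [DecidableRel G.Adj]
    {R : Type*} [CommRing R] (t : R) : Matrix (Option (Fin n)) (Option (Fin n)) R :=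
  fun i j => match i, j with
  | none, none => 0
  | none, some _ => 1
  | some _, none => 1
  | some i, some j => if i = j then 0 else if G.Adj i j then 1 else t

/-- `C_G(t) = det A_G(t)` as a polynomial in `t`. -/
def graphPoly {n : ℕ} (G : SimpleGraph (Fin n)) [DecidableRel G.Adj] : Polynomial ℝ :=
  (graphMat G (Polynomial.X : Polynomial ℝ)).det

/-- `τ₁(G)`: the smallest root `t > 1` of `C_G`. -/
def tau1 {n : ℕ} (G : SimpleGraph (Fin n)) [DecidableRel G.Adj] : ℝ :=
  sInf {t : ℝ | 1 < t ∧ (graphPoly G).IsRoot t}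

open scoped Classical in
/-- `μ(G)`: the multiplicity of the smallest root `t > 1` of `C_G`, or `0` if none exists. -/
def mu {n : ℕ} (G : SimpleGraph (Fin n)) [DecidableRel G.Adj] : ℕ :=
  if (∃ t : ℝ, 1 < t ∧ (graphPoly G).IsRoot t) then
    (graphPoly G).rootMultiplicity (tau1 G) else 0

/-- `f` realizes `G` in Euclidean space as a two-distance set: distance `1` on edges
and distance `b` on non-edges. -/
def IsRealization {n d : ℕ} (G : SimpleGraph (Fin n)) (b : ℝ)
    (f : Fin n → EuclideanSpace ℝ (Fin d)) : Prop :=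
  (∀ i j, G.Adj i j → dist (f i) (f j) = 1) ∧
  (∀ i j, i ≠ j → ¬ G.Adj i j → dist (f i) (f j) = b)

/-- The Cayley–Menger matrix of a tuple of points (the `none` index is the border). -/
def cmMat {n d : ℕ} (p : Fin n → EuclideanSpace ℝ (Fin d)) :
    Matrix (Option (Fin n)) (Option (Fin n)) ℝ :=
  fun i j => match i, j with
  | none, none => 0
  | none, some _ => 1
  | some _, none => 1
  | some i, some j => dist (p i) (p j) ^ 2

/-- `G` is a disjoint union of cliques (adjacency is transitive). -/
def IsUnionOfCliques {V : Type*} (G : SimpleGraph V) : Prop :=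
  ∀ u v w, G.Adj u v → G.Adj v w → u ≠ w → G.Adj u w

/-- `G` is complete multipartite (non-adjacency is transitive). -/
def IsCompleteMultipartite {V : Type*} (G : SimpleGraph V) : Prop :=
  ∀ u v w, ¬ G.Adj u v → ¬ G.Adj v w → ¬ G.Adj u w

/-- The clique number `ω(G)`. -/
def cliqueNumber {V : Type*} (G : SimpleGraph V) : ℕ :=
  sSup {k | ∃ s : Finset V, G.IsNClique k s}


namespace Stmt17Aux

open Matrix Finset

variable {n : ℕ} (G : SimpleGraph (Fin n)) [DecidableRel G.Adj]

noncomputable def eps (n : ℕ) : ℝ := (n : ℝ)⁻¹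

/-- squared distance matrix -/
noncomputable def Dm : Fin n → Fin n → ℝ := fun i j =>
  if i = j then 0 else if G.Adj i j then 1 else 1 + eps n

/-- edge indicator -/
noncomputable def Em : Fin n → Fin n → ℝ := fun i j => if G.Adj i j then 1 else 0

noncomputable def rr (i : Fin n) : ℝ := ∑ k, Dm G i k
noncomputable def ss : ℝ := ∑ i, rr G i

noncomputable def Gm : Matrix (Fin n) (Fin n) ℝ :=
  Matrix.of fun i j => -(1/2) * (Dm G i j - rr G i / n - rr G j / n + ss G / n^2)

lemma eps_nonneg (n : ℕ) : 0 ≤ eps n := by unfold eps; positivity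

lemma Dm_diag (i : Fin n) : Dm G i i = 0 := by simp [Dm]

lemma Dm_symm (i j : Fin n) : Dm G i j = Dm G j i := by
  rcases eq_or_ne i j with h | h
  · simp [h]
  · simp only [Dm, if_neg h, if_neg h.symm, G.adj_comm i j]

lemma Dm_decomp (i j : Fin n) :
    Dm G i j = (1 + eps n) * (if i = j then 0 else 1) - eps n * Em G i j := by
  rcases eq_or_ne i j with h | h
  · subst h; simp [Dm, Em]
  · by_cases hadj : G.Adj i j <;> simp [Dm, Em, h, hadj] <;> ring_nf

lemma Em_abs_le (i j : Fin n) : |Em G i j| ≤ 1 := by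
  unfold Em; split <;> norm_num

lemma Gm_symm (i j : Fin n) : Gm G i j = Gm G j i := by
  simp only [Gm, Matrix.of_apply, Dm_symm G i j]; ring

lemma Gm_isHermitian : (Gm G).IsHermitian := by
  ext i j
  simp only [Matrix.conjTranspose_apply, star_trivial]
  exact Gm_symm G j i

lemma Gm_combo {i j : Fin n} (h : i ≠ j) :
    Gm G i i + Gm G j j - 2 * Gm G i j = Dm G i j := by
  simp only [Gm, Matrix.of_apply, Dm_diag]
  ring

lemma Gm_rowsum (hn : 0 < n) (i : Fin n) : ∑ j, Gm G i j = 0 := by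
  have hn' : (n:ℝ) ≠ 0 := Nat.cast_ne_zero.mpr hn.ne'
  have h1 : ∑ j, Gm G i j =
      -(1/2) * ((∑ j, Dm G i j) - (∑ _j : Fin n, rr G i / n)
        - (∑ j, rr G j / n) + ∑ _j : Fin n, ss G / n^2) := by
    simp only [Gm, Matrix.of_apply]
    rw [← Finset.mul_sum]
    congr 1
    rw [Finset.sum_add_distrib, Finset.sum_sub_distrib, Finset.sum_sub_distrib]
  rw [h1, Finset.sum_const, Finset.sum_const, Finset.card_univ, Fintype.card_fin,
    ← Finset.sum_div, ← rr, ← ss]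
  field_simp
  have hnn : (n:ℝ) * (n:ℝ)⁻¹ = 1 := mul_inv_cancel₀ hn'
  linear_combination ((n:ℝ) * rr G i - ss G * ((n:ℝ) * (n:ℝ)⁻¹ + 1)) * hnn

lemma Gm_colsum (hn : 0 < n) (j : Fin n) : ∑ i, Gm G i j = 0 := by
  have := Gm_rowsum G hn j
  calc ∑ i, Gm G i j = ∑ i, Gm G j i := by
        exact Finset.sum_congr rfl fun i _ => Gm_symm G i j
    _ = 0 := this

/-- quadratic form for mean-zero vectors -/
lemma quad_meanzero (w : Fin n → ℝ) (hw : ∑ i, w i = 0) :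
    ∑ i, w i * ∑ j, Gm G i j * w j
      = (1 + eps n)/2 * (∑ i, w i ^ 2) + eps n / 2 * ∑ i, w i * ∑ j, Em G i j * w j := by
  have hDm : ∀ i, ∑ j, Dm G i j * w j = -(1 + eps n) * w i - eps n * ∑ j, Em G i j * w j := by
    intro i
    have h2 : ∀ j, Dm G i j * w j
        = (1 + eps n) * w j - (1 + eps n) * (if i = j then w j else 0)
          - eps n * (Em G i j * w j) := by
      intro j
      rw [Dm_decomp]
      rcases eq_or_ne i j with h | h <;> simp [h] <;> ring
    rw [Finset.sum_congr rfl fun j _ => h2 j]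
    simp only [Finset.sum_sub_distrib, ← Finset.mul_sum, hw, mul_zero,
      Finset.sum_ite_eq, Finset.mem_univ, if_pos]
    ring
  have hGmrow : ∀ i, ∑ j, Gm G i j * w j = -(1/2) * (∑ j, Dm G i j * w j)
      + 1/(2*(n:ℝ)) * ∑ j, rr G j * w j := by
    intro i
    have h3 : ∀ j, Gm G i j * w j = -(1/2) * (Dm G i j * w j) + 1/(2*(n:ℝ)) * (rr G j * w j)
        + ((rr G i)/(2*n)) * w j + (-(ss G)/(2*n^2)) * w j := by
      intro j; simp only [Gm, Matrix.of_apply]; ring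
    rw [Finset.sum_congr rfl fun j _ => h3 j]
    simp only [Finset.sum_add_distrib, ← Finset.mul_sum, hw, mul_zero, add_zero]
  calc ∑ i, w i * ∑ j, Gm G i j * w j
      = ∑ i, (-(1/2) * (w i * ∑ j, Dm G i j * w j)
          + (1/(2*(n:ℝ)) * ∑ j, rr G j * w j) * w i) := by
        refine Finset.sum_congr rfl fun i _ => ?_
        rw [hGmrow i]; ring
    _ = -(1/2) * ∑ i, w i * ∑ j, Dm G i j * w j := by
        simp only [Finset.sum_add_distrib, ← Finset.mul_sum, hw, mul_zero, add_zero]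
    _ = -(1/2) * ∑ i, (-(1 + eps n) * (w i)^2 - eps n * (w i * ∑ j, Em G i j * w j)) := by
        congr 1
        refine Finset.sum_congr rfl fun i _ => ?_
        rw [hDm i]; ring
    _ = _ := by
        simp only [Finset.sum_sub_distrib, ← Finset.mul_sum]
        ring

lemma quad_E_bound (w : Fin n → ℝ) :
    |∑ i, w i * ∑ j, Em G i j * w j| ≤ (n:ℝ) * ∑ i, w i ^ 2 := by
  have h1 : |∑ i, w i * ∑ j, Em G i j * w j| ≤ ∑ i, |w i| * ∑ j, |w j| := by
    refine (Finset.abs_sum_le_sum_abs _ _).trans (Finset.sum_le_sum fun i _ => ?_)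
    rw [abs_mul]
    refine mul_le_mul_of_nonneg_left ?_ (abs_nonneg _)
    refine (Finset.abs_sum_le_sum_abs _ _).trans (Finset.sum_le_sum fun j _ => ?_)
    rw [abs_mul]
    exact mul_le_of_le_one_left (abs_nonneg _) (Em_abs_le G i j)
  have h2 : ∑ i, |w i| * ∑ j, |w j| = (∑ i, |w i|) ^ 2 := by
    rw [← Finset.sum_mul, sq]
  have h3 : (∑ i, |w i|) ^ 2 ≤ (n:ℝ) * ∑ i, w i ^ 2 := by
    have := sq_sum_le_card_mul_sum_sq (s := (Finset.univ : Finset (Fin n)))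
      (f := fun i => |w i|)
    simpa [sq_abs, Finset.card_univ] using this
  calc |∑ i, w i * ∑ j, Em G i j * w j| ≤ ∑ i, |w i| * ∑ j, |w j| := h1
    _ = (∑ i, |w i|) ^ 2 := h2
    _ ≤ (n:ℝ) * ∑ i, w i ^ 2 := h3

lemma Gm_posSemidef (hn : 0 < n) : (Gm G).PosSemidef := by
  refine Matrix.posSemidef_iff_dotProduct_mulVec.mpr ⟨Gm_isHermitian G, fun x => ?_⟩
  have hn' : (n:ℝ) ≠ 0 := Nat.cast_ne_zero.mpr hn.ne'
  -- rewrite the quadratic form as a double sum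
  have hform : star x ⬝ᵥ (Gm G) *ᵥ x = ∑ i, x i * ∑ j, Gm G i j * x j := by
    simp [dotProduct, Matrix.mulVec, dotProduct]
  rw [hform]
  set w : Fin n → ℝ := fun i => x i - (∑ k, x k) / n with hwdef
  have hw : ∑ i, w i = 0 := by
    simp only [hwdef, Finset.sum_sub_distrib, Finset.sum_const, Finset.card_univ,
      Fintype.card_fin, nsmul_eq_mul]
    field_simp
    ring
  -- replace x by w in the quadratic form
  have hred : ∑ i, x i * ∑ j, Gm G i j * x j = ∑ i, w i * ∑ j, Gm G i j * w j := by
    have hrow : ∀ i, ∑ j, Gm G i j * x j = ∑ j, Gm G i j * w j := by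
      intro i
      have : ∀ j, Gm G i j * x j = Gm G i j * w j + ((∑ k, x k)/n) * Gm G i j := by
        intro j; simp only [hwdef]; ring
      rw [Finset.sum_congr rfl fun j _ => this j, Finset.sum_add_distrib, ← Finset.mul_sum,
        Gm_rowsum G hn, mul_zero, add_zero]
    calc ∑ i, x i * ∑ j, Gm G i j * x j = ∑ i, x i * ∑ j, Gm G i j * w j := by
          exact Finset.sum_congr rfl fun i _ => by rw [hrow i]
      _ = ∑ i, (w i * ∑ j, Gm G i j * w j + ((∑ k, x k)/n) * ∑ j, Gm G i j * w j) := by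
          refine Finset.sum_congr rfl fun i _ => ?_
          simp only [hwdef]; ring
      _ = ∑ i, w i * ∑ j, Gm G i j * w j := by
          have hzero : ∑ i, ∑ j, Gm G i j * w j = 0 := by
            rw [Finset.sum_comm]
            refine Finset.sum_eq_zero fun j _ => ?_
            rw [← Finset.sum_mul, Gm_colsum G hn, zero_mul]
          rw [Finset.sum_add_distrib, ← Finset.mul_sum, hzero, mul_zero, add_zero]
  rw [hred, quad_meanzero G w hw]
  have hE := abs_le.mp (quad_E_bound G w)
  have hS : 0 ≤ ∑ i, w i ^ 2 := Finset.sum_nonneg fun i _ => sq_nonneg _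
  have heps : eps n * (n:ℝ) = 1 := by unfold eps; exact inv_mul_cancel₀ hn'
  nlinarith [mul_nonneg (eps_nonneg n) hS,
    mul_nonneg (eps_nonneg n)
      (by linarith [hE.1] : (0:ℝ) ≤ ∑ i, w i * ∑ j, Em G i j * w j + (n:ℝ) * ∑ i, w i ^ 2)]

lemma eps_pos (hn : 0 < n) : 0 < eps n := by
  unfold eps
  exact inv_pos.mpr (by exact_mod_cast hn)

lemma Dm_offdiag_ge_one {i j : Fin n} (h : i ≠ j) : 1 ≤ Dm G i j := by
  have := eps_nonneg n
  unfold Dm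
  rw [if_neg h]
  split <;> linarith

/-- the coordinate-sum functional -/
noncomputable def ell (n : ℕ) : EuclideanSpace ℝ (Fin n) →ₗ[ℝ] ℝ where
  toFun v := ∑ k, v k
  map_add' u v := by
    show ∑ k, (u + v) k = _
    simp [Finset.sum_add_distrib]
  map_smul' c v := by
    show ∑ k, (c • v) k = _
    simp [Finset.mul_sum]

lemma finrank_ker_ell (hn : 0 < n) :
    Module.finrank ℝ (LinearMap.ker (ell n)) = n - 1 := by
  have hn' : (n:ℝ) ≠ 0 := Nat.cast_ne_zero.mpr hn.ne'
  have hsurj : Function.Surjective (ell n) := by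
    intro c
    refine ⟨WithLp.toLp 2 (fun _ => c / n), ?_⟩
    show ∑ _k : Fin n, c / (n:ℝ) = c
    rw [Finset.sum_const, Finset.card_univ, Fintype.card_fin, nsmul_eq_mul]
    field_simp
  have h1 := LinearMap.finrank_range_add_finrank_ker (ell n)
  rw [LinearMap.range_eq_top.mpr hsurj, finrank_top, finrank_euclideanSpace_fin,
    Module.finrank_self] at h1
  omega

open scoped MatrixOrder in
lemma exists_embed (hn : 0 < n) :
    ∃ f : Fin n → EuclideanSpace ℝ (Fin (n-1)), Function.Injective f ∧
      (∀ i j, G.Adj i j → dist (f i) (f j) = 1) ∧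
      (∀ i j, i ≠ j → ¬ G.Adj i j → dist (f i) (f j) = Real.sqrt (1 + eps n)) := by
  classical
  have hpsd := Gm_posSemidef G hn
  set S := CFC.sqrt (Gm G) with hSdef
  have hmul : S * S = Gm G := CFC.sqrt_mul_sqrt_self _ hpsd.nonneg
  have hherm : S.IsHermitian := (CFC.sqrt_nonneg (Gm G)).posSemidef.1
  have hsym : ∀ a b, S a b = S b a := by
    intro a b
    conv_lhs => rw [← hherm]
    simp [Matrix.conjTranspose_apply]
  have hgram : ∀ i j, ∑ k, S i k * S j k = Gm G i j := by
    intro i j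
    rw [← hmul, Matrix.mul_apply]
    exact Finset.sum_congr rfl fun k _ => by rw [hsym k j]
  -- rows of S sum to zero
  have hsq0 : ∑ k, (∑ j, S k j) ^ 2 = 0 := by
    have h0 : ∑ i, ∑ j, Gm G i j = 0 :=
      Finset.sum_eq_zero fun i _ => Gm_rowsum G hn i
    calc ∑ k, (∑ j, S k j) ^ 2
        = ∑ k, (∑ i, S i k) * (∑ j, S k j) := by
          refine Finset.sum_congr rfl fun k _ => ?_
          rw [sq]
          congr 1
          exact Finset.sum_congr rfl fun i _ => hsym k i
      _ = ∑ k, ∑ i, S i k * (∑ j, S k j) := by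
          exact Finset.sum_congr rfl fun k _ => Finset.sum_mul _ _ _
      _ = ∑ i, ∑ k, S i k * (∑ j, S k j) := Finset.sum_comm
      _ = ∑ i, ∑ k, ∑ j, S i k * S k j := by
          refine Finset.sum_congr rfl fun i _ => Finset.sum_congr rfl fun k _ => ?_
          exact Finset.mul_sum _ _ _
      _ = ∑ i, ∑ j, ∑ k, S i k * S k j := by
          exact Finset.sum_congr rfl fun i _ => Finset.sum_comm
      _ = ∑ i, ∑ j, Gm G i j := by
          refine Finset.sum_congr rfl fun i _ => Finset.sum_congr rfl fun j _ => ?_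
          rw [← Matrix.mul_apply, hmul]
      _ = 0 := h0
  have hrow0 : ∀ i, ∑ k, S i k = 0 := by
    intro i
    have := (Finset.sum_eq_zero_iff_of_nonneg
      (fun k _ => sq_nonneg (∑ j, S k j))).mp hsq0 i (Finset.mem_univ i)
    exact (pow_eq_zero_iff two_ne_zero).mp this
  -- the points
  set p : Fin n → EuclideanSpace ℝ (Fin n) := fun i => WithLp.toLp 2 (fun k => S i k) with hpdef
  have hdist2 : ∀ i j, dist (p i) (p j) ^ 2 = Gm G i i + Gm G j j - 2 * Gm G i j := by
    intro i j
    rw [EuclideanSpace.dist_eq]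
    rw [Real.sq_sqrt (Finset.sum_nonneg fun k _ => sq_nonneg _)]
    have : ∀ k, dist (p i k) (p j k) ^ 2
        = S i k * S i k + S j k * S j k - 2 * (S i k * S j k) := by
      intro k
      rw [Real.dist_eq, sq_abs]
      show (S i k - S j k)^2 = _
      ring
    rw [Finset.sum_congr rfl fun k _ => this k, Finset.sum_sub_distrib,
      Finset.sum_add_distrib, ← Finset.mul_sum, hgram, hgram, hgram]
  have hdistD : ∀ i j, i ≠ j → dist (p i) (p j) ^ 2 = Dm G i j := by
    intro i j h
    rw [hdist2 i j, Gm_combo G h]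
  -- membership in the hyperplane
  have hmem : ∀ i, p i ∈ LinearMap.ker (ell n) := by
    intro i
    rw [LinearMap.mem_ker]
    show ∑ k, S i k = 0
    exact hrow0 i
  have hker := finrank_ker_ell (n := n) hn
  rw [← hker]
  set B := stdOrthonormalBasis ℝ (LinearMap.ker (ell n)) with hBdef
  refine ⟨fun i => B.repr ⟨p i, hmem i⟩, ?_, ?_, ?_⟩
  · intro i j hij
    by_contra hne
    have hd : dist (B.repr ⟨p i, hmem i⟩) (B.repr ⟨p j, hmem j⟩) = 0 :=
      dist_eq_zero.mpr hij
    rw [LinearIsometryEquiv.dist_map, Subtype.dist_eq] at hd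
    have := hdistD i j hne
    rw [hd] at this
    have h1 := Dm_offdiag_ge_one G hne
    simp at this
    linarith [this.symm ▸ h1]
  · intro i j hadj
    have hne : i ≠ j := G.ne_of_adj hadj
    have h2 : dist (p i) (p j) ^ 2 = 1 := by
      rw [hdistD i j hne]
      simp [Dm, hne, hadj]
    rw [LinearIsometryEquiv.dist_map, Subtype.dist_eq,
      ← Real.sqrt_sq dist_nonneg, h2, Real.sqrt_one]
  · intro i j hne hadj
    have h2 : dist (p i) (p j) ^ 2 = 1 + eps n := by
      rw [hdistD i j hne]
      simp [Dm, hne, hadj]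
    rw [LinearIsometryEquiv.dist_map, Subtype.dist_eq,
      ← Real.sqrt_sq dist_nonneg, h2]

end Stmt17Aux


theorem stmt17 {n : ℕ} (G : SimpleGraph (Fin n)) :
    ∃ b : ℝ, 1 < b ∧ ∃ f : Fin n → EuclideanSpace ℝ (Fin (n - 1)),
      Function.Injective f ∧ IsRealization G b f := by
  classical
  rcases Nat.eq_zero_or_pos n with hn | hn
  · subst hn
    exact ⟨2, one_lt_two, Fin.elim0, fun a => a.elim0,
      ⟨fun i => i.elim0, fun i => i.elim0⟩⟩
  · obtain ⟨f, hinj, h1, h2⟩ := Stmt17Aux.exists_embed G hn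
    have hepos := Stmt17Aux.eps_pos (n := n) hn
    refine ⟨Real.sqrt (1 + Stmt17Aux.eps n), ?_, f, hinj, h1, h2⟩
    calc (1:ℝ) = Real.sqrt 1 := Real.sqrt_one.symm
      _ < Real.sqrt (1 + Stmt17Aux.eps n) :=
        Real.sqrt_lt_sqrt (by norm_num) (by linarith)
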